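/- arXiv:2303.03810 — 4 statements merged into one kernel-verified Lean document; each statement's English description precedes it below -/
import Mathlib

section
/- Under the assumptions 0 < u < √(gh), the root λ₂(β) of p(λ) = -λ((u-λ)² - gh) + ghβ(λ-u) which tends to 0 as β → 0⁺ satisfies λ₂(β) = β g h u/(gh - u²) + O(β²); equivalently, λ₂(β) = β u/(1 - F_r²) + O(β²) with F_r = u/√(gh). -/
open Filter Asymptotics

set_option maxHeartbeats 1000000 in
/-- The root λ₂(β) of p(λ) = -λ((u-λ)² - gh) + ghβ(λ-u) which tends to 0 as β → 0⁺
satisfies λ₂(β) = β g h u/(gh - u²) + O(β²); equivalently λ₂(β) = β u/(1 - F_r²) + O(β²)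
with F_r = u/√(gh). -/
theorem exner_lambda2_expansion
    (g h u : ℝ) (hg : 0 < g) (hh : 0 < h)
    (hu : 0 < u) (hsub : u < Real.sqrt (g * h))
    (l₂ : ℝ → ℝ)
    (hroot : ∀ᶠ β in nhdsWithin (0 : ℝ) (Set.Ioi 0),
      -(l₂ β) * ((u - l₂ β) ^ 2 - g * h) + g * h * β * (l₂ β - u) = 0)
    (hcont : Tendsto l₂ (nhdsWithin (0 : ℝ) (Set.Ioi 0)) (nhds 0)) :
    (fun β => l₂ β - β * g * h * u / (g * h - u ^ 2))
      =O[nhdsWithin (0 : ℝ) (Set.Ioi 0)] (fun β => β ^ 2) ∧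
    (fun β => l₂ β - β * u / (1 - (u / Real.sqrt (g * h)) ^ 2))
      =O[nhdsWithin (0 : ℝ) (Set.Ioi 0)] (fun β => β ^ 2) := by
  have hgh : 0 < g * h := mul_pos hg hh
  have hsq : Real.sqrt (g * h) ^ 2 = g * h := Real.sq_sqrt hgh.le
  have hA0 : 0 < g * h - u ^ 2 := by
    have h1 : u ^ 2 < Real.sqrt (g * h) ^ 2 := by
      apply pow_lt_pow_left₀ hsub hu.le
      norm_num
    rw [hsq] at h1
    linarith
  obtain ⟨A, hAdef⟩ : ∃ A : ℝ, A = g * h - u ^ 2 := ⟨_, rfl⟩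
  have hA : 0 < A := hAdef ▸ hA0
  obtain ⟨K, hKdef⟩ : ∃ K : ℝ, K = 2 * g * h * u / A := ⟨_, rfl⟩
  have hK : 0 < K := by rw [hKdef]; positivity
  obtain ⟨CA, hCAdef⟩ : ∃ CA : ℝ, CA = K * (2 * u * K + K ^ 2 + g * h) := ⟨_, rfl⟩
  have hCA : 0 < CA := by rw [hCAdef]; positivity
  obtain ⟨ε, hεdef⟩ : ∃ ε : ℝ, ε = min 1 (A / (4 * (2 * u + 1))) := ⟨_, rfl⟩
  have hεpos : 0 < ε := by rw [hεdef]; exact lt_min one_pos (by positivity)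
  have hε1 : ε ≤ 1 := hεdef ▸ min_le_left _ _
  have hεA : (2 * u + 1) * ε ≤ A / 4 := by
    have hε2 : ε ≤ A / (4 * (2 * u + 1)) := hεdef ▸ min_le_right _ _
    rw [le_div_iff₀ (by positivity)] at hε2
    nlinarith
  have main : (fun β => l₂ β - β * g * h * u / (g * h - u ^ 2))
      =O[nhdsWithin (0 : ℝ) (Set.Ioi 0)] (fun β => β ^ 2) := by
    rw [isBigO_iff]
    refine ⟨CA / A, ?_⟩
    have hβ1 : ∀ᶠ β : ℝ in nhdsWithin 0 (Set.Ioi 0), |β| ≤ 1 := by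
      apply Filter.Eventually.filter_mono nhdsWithin_le_nhds
      filter_upwards [Metric.ball_mem_nhds (0 : ℝ) one_pos] with x hx
      rw [Metric.mem_ball, Real.dist_eq, sub_zero] at hx
      exact hx.le
    have hLε : ∀ᶠ β : ℝ in nhdsWithin 0 (Set.Ioi 0), |l₂ β| ≤ ε := by
      filter_upwards [hcont (Metric.ball_mem_nhds (0 : ℝ) hεpos)] with x hx
      rw [Set.mem_preimage, Metric.mem_ball, Real.dist_eq, sub_zero] at hx
      exact hx.le
    filter_upwards [hroot, hβ1, hLε, self_mem_nhdsWithin] with β heq hβ1' hLε' hβpos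
    have hβ0 : 0 < β := hβpos
    have hβle1 : β ≤ 1 := le_trans (le_abs_self β) hβ1'
    obtain ⟨L, hLdef⟩ : ∃ L : ℝ, L = l₂ β := ⟨_, rfl⟩
    rw [← hLdef] at heq hLε' ⊢
    have hLub : L ≤ ε := le_trans (le_abs_self L) hLε'
    have hLlb : -ε ≤ L := neg_le_of_abs_le hLε'
    obtain ⟨D, hDdef⟩ : ∃ D : ℝ, D = A + 2 * u * L - L ^ 2 + g * h * β := ⟨_, rfl⟩
    have hD : A / 2 ≤ D := by
      rw [hDdef]
      nlinarith [mul_nonneg (sub_nonneg.2 hLub) (by linarith : (0:ℝ) ≤ ε + L),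
        mul_pos hgh hβ0, mul_nonneg hu.le hεpos.le]
    have hDpos : 0 < D := lt_of_lt_of_le (by positivity) hD
    have hLD : L * D = g * h * u * β := by
      rw [hDdef, hAdef]; linear_combination heq
    have hLpos : 0 < L := by
      have h1 : 0 < L * D := by rw [hLD]; positivity
      have h2 := div_pos h1 hDpos
      rwa [mul_div_assoc, div_self hDpos.ne', mul_one] at h2
    have hLK : L ≤ K * β := by
      rw [hKdef, div_mul_eq_mul_div, le_div_iff₀ hA]
      nlinarith [hDdef ▸ hLD]
    have key : |A * L - g * h * u * β| = L * |2 * u * L - L ^ 2 + g * h * β| := by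
      have h1 : A * L - g * h * u * β = -(L * (2 * u * L - L ^ 2 + g * h * β)) := by
        have h2 : L * (A + 2 * u * L - L ^ 2 + g * h * β) = g * h * u * β := by
          rw [← hDdef]; exact hLD
        linear_combination h2
      rw [h1, abs_neg, abs_mul, abs_of_pos hLpos]
    have hinner : |2 * u * L - L ^ 2 + g * h * β| ≤ 2 * u * L + L ^ 2 + g * h * β := by
      rw [abs_le]
      constructor <;> linarith [sq_nonneg L, mul_pos hu hLpos, mul_pos hgh hβ0]
    have step : |A * L - g * h * u * β| ≤ CA * β ^ 2 := by
      rw [key]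
      have h2 : L * (2 * u * L + L ^ 2 + g * h * β)
          ≤ K * β * (2 * u * (K * β) + (K * β) ^ 2 + g * h * β) := by
        have hKβ : 0 < K * β := mul_pos hK hβ0
        have hd : 0 ≤ K * β - L := sub_nonneg.2 hLK
        nlinarith [mul_nonneg hd hLpos.le, mul_nonneg hd hKβ.le,
          mul_nonneg (mul_nonneg hd hKβ.le) hKβ.le,
          mul_nonneg (mul_nonneg hd hLpos.le) hKβ.le,
          mul_nonneg (mul_nonneg hd hLpos.le) hLpos.le,
          mul_nonneg (mul_nonneg hu.le hd) (add_nonneg hKβ.le hLpos.le),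
          mul_nonneg (mul_nonneg hgh.le hβ0.le) hd]
      have h3 : K * β * (2 * u * (K * β) + (K * β) ^ 2 + g * h * β) ≤ CA * β ^ 2 := by
        rw [hCAdef]
        nlinarith [mul_nonneg (mul_nonneg (pow_pos hK 3).le (sq_nonneg β))
          (sub_nonneg.2 hβle1)]
      calc L * |2 * u * L - L ^ 2 + g * h * β|
          ≤ L * (2 * u * L + L ^ 2 + g * h * β) :=
            mul_le_mul_of_nonneg_left hinner hLpos.le
        _ ≤ K * β * (2 * u * (K * β) + (K * β) ^ 2 + g * h * β) := h2
        _ ≤ CA * β ^ 2 := h3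
    have goal : |L - β * g * h * u / (g * h - u ^ 2)| ≤ CA / A * β ^ 2 := by
      rw [← hAdef]
      have h1 : L - β * g * h * u / A = (A * L - g * h * u * β) / A := by
        field_simp
      rw [h1, abs_div, abs_of_pos hA, div_le_iff₀ hA]
      calc |A * L - g * h * u * β| ≤ CA * β ^ 2 := step
        _ = CA / A * β ^ 2 * A := by field_simp
    simpa [Real.norm_eq_abs, abs_of_pos hβ0, abs_pow] using goal
  refine ⟨main, ?_⟩
  have hfun : (fun β => l₂ β - β * u / (1 - (u / Real.sqrt (g * h)) ^ 2))
      = (fun β => l₂ β - β * g * h * u / (g * h - u ^ 2)) := by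
    funext β
    have hs : Real.sqrt (g * h) ≠ 0 := by positivity
    have h1 : 1 - (u / Real.sqrt (g * h)) ^ 2 = (g * h - u ^ 2) / (g * h) := by
      rw [div_pow, hsq]
      field_simp
    rw [h1, div_div_eq_mul_div]
    ring_nf
  rw [hfun]
  exact main
end

section
/- Under the assumptions 0 < u < √(gh), the root λ₁(β) of p(λ) = -λ((u-λ)² - gh) + ghβ(λ-u) which tends to u - √(gh) as β → 0⁺ satisfies λ₁(β) = u - √(gh) - β√(gh)/(2(1 - F_r)) + O(β²), where F_r = u/√(gh). -/
open Filter Asymptotics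

/-- The root λ₁(β) of p(λ) = -λ((u-λ)² - gh) + ghβ(λ-u) which tends to u - √(gh) as
β → 0⁺ satisfies λ₁(β) = u - √(gh) - β√(gh)/(2(1 - F_r)) + O(β²), F_r = u/√(gh). -/
theorem exner_lambda1_expansion
    (g h u : ℝ) (hg : 0 < g) (hh : 0 < h)
    (hu : 0 < u) (hsub : u < Real.sqrt (g * h))
    (l₁ : ℝ → ℝ)
    (hroot : ∀ᶠ β in nhdsWithin (0 : ℝ) (Set.Ioi 0),
      -(l₁ β) * ((u - l₁ β) ^ 2 - g * h) + g * h * β * (l₁ β - u) = 0)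
    (hcont : Tendsto l₁ (nhdsWithin (0 : ℝ) (Set.Ioi 0))
      (nhds (u - Real.sqrt (g * h)))) :
    (fun β => l₁ β -
        (u - Real.sqrt (g * h)
          - β * Real.sqrt (g * h) / (2 * (1 - u / Real.sqrt (g * h)))))
      =O[nhdsWithin (0 : ℝ) (Set.Ioi 0)] (fun β => β ^ 2) := by
  set L := nhdsWithin (0 : ℝ) (Set.Ioi 0) with hL
  set c := Real.sqrt (g * h) with hcdef
  have hc : 0 < c := Real.sqrt_pos.mpr (by positivity)
  have hc2 : c ^ 2 = g * h := Real.sq_sqrt (by positivity)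
  set lam0 : ℝ := u - c with hl0
  have hlam0 : lam0 < 0 := by simp only [hl0]; linarith
  set E : ℝ → ℝ := fun β => l₁ β - lam0 with hEdef
  have hE0 : Tendsto E L (nhds 0) := by
    have := hcont.sub_const lam0
    simpa [hEdef] using this
  have hβ0 : Tendsto (fun β : ℝ => β) L (nhds 0) :=
    tendsto_id.mono_right nhdsWithin_le_nhds
  set Q : ℝ → ℝ := fun β => 2*c*lam0 - lam0*E β + 2*c*E β - (E β)^2 + c^2*β with hQdef
  have hkey : ∀ᶠ β in L, E β * Q β = c^3 * β := by
    filter_upwards [hroot] with β hp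
    have hp' : -(l₁ β) * ((u - l₁ β) ^ 2 - c ^ 2) + c ^ 2 * β * (l₁ β - u) = 0 := by
      rw [hc2]; exact hp
    simp only [hQdef, hEdef, hl0]
    linear_combination hp'
  have hQt : Tendsto Q L (nhds (2*c*lam0)) := by
    have : Tendsto Q L (nhds (2*c*lam0 - lam0*0 + 2*c*0 - 0^2 + c^2*0)) := by
      exact ((((tendsto_const_nhds.sub (tendsto_const_nhds.mul hE0)).add
        (tendsto_const_nhds.mul hE0)).sub (hE0.pow 2)).add
        (tendsto_const_nhds.mul hβ0))
    simpa using this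
  have hQne : (2*c*lam0 : ℝ) ≠ 0 := by nlinarith
  have hQev : ∀ᶠ β in L, Q β ≠ 0 := hQt.eventually_ne hQne
  have hEeq : ∀ᶠ β in L, E β = c^3 * β / Q β := by
    filter_upwards [hkey, hQev] with β hk hq
    field_simp
    linarith [hk]
  have hbd : (fun β => c^3 / Q β) =O[L] (fun _ => (1:ℝ)) :=
    (tendsto_const_nhds.div hQt hQne).isBigO_one ℝ
  have hEO : E =O[L] (fun β => β) := by
    have h1 : (fun β => c^3 / Q β * β) =O[L] (fun β => β) := by
      simpa using hbd.mul (isBigO_refl (fun β : ℝ => β) L)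
    exact h1.congr' (by filter_upwards [hEeq] with β hb; rw [hb]; ring)
      (EventuallyEq.refl _ _)
  have hfinal : ∀ᶠ β in L, l₁ β -
      (lam0 - β * c / (2 * (1 - u / c))) =
      (1/(2*c*lam0)) * ((lam0 - 2*c + E β) * (E β)^2 - c^2*β*E β) := by
    filter_upwards [hkey] with β hk
    have hlam0ne : lam0 ≠ 0 := ne_of_lt hlam0
    have hcu' : (1 : ℝ) - u / c ≠ 0 := by
      have : u / c < 1 := (div_lt_one hc).mpr hsub
      linarith
    have num : (l₁ β - lam0) * (2*c*lam0) - c^3*β =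
        (lam0 - 2*c + E β) * (E β)^2 - c^2*β*E β := by
      simp only [hEdef, hQdef] at hk ⊢
      linear_combination hk
    have h2 : β * c / (2 * (1 - u / c)) = -(c^3*β)/(2*c*lam0) := by
      have hne3 : c * 2 - u * 2 ≠ 0 := by intro hz; nlinarith
      have hne4 : c - u ≠ 0 := sub_ne_zero.mpr (ne_of_gt hsub)
      rw [hl0]
      field_simp [hne3, hne4]
      have hne5 : u - c ≠ 0 := by intro hz; linarith
      rw [eq_comm, neg_eq_iff_eq_neg, div_eq_iff hne5]
      ring
    rw [h2]
    have h3 : l₁ β - (lam0 - -(c^3*β)/(2*c*lam0)) =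
        ((l₁ β - lam0) * (2*c*lam0) - c^3*β) / (2*c*lam0) := by
      field_simp
      ring
    rw [h3, num]
    ring
  have hRHS : (fun β => (1/(2*c*lam0)) * ((lam0 - 2*c + E β) * (E β)^2 - c^2*β*E β))
      =O[L] (fun β => β^2) := by
    have hb1 : (fun β => lam0 - 2*c + E β) =O[L] (fun _ => (1:ℝ)) :=
      (tendsto_const_nhds.add hE0).isBigO_one ℝ
    have hE2 : (fun β => (E β)^2) =O[L] (fun β => β^2) := by
      simpa [pow_two] using hEO.mul hEO
    have h2 : (fun β => (lam0 - 2*c + E β) * (E β)^2) =O[L] (fun β => β^2) := by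
      simpa using hb1.mul hE2
    have h3 : (fun β => c^2*β*E β) =O[L] (fun β => β^2) := by
      have h4 : (fun β => c^2 * E β * β) =O[L] (fun β : ℝ => β * β) :=
        (hEO.const_mul_left (c^2)).mul (isBigO_refl (fun β : ℝ => β) L)
      exact h4.congr (fun β => by ring) (fun β => (pow_two β).symm)
    exact ((h2.sub h3).const_mul_left _)
  exact IsBigO.congr' hRHS
    (by filter_upwards [hfinal] with β hb; exact hb.symm)
    (EventuallyEq.refl _ _)
end

section
/- Under the assumptions 0 < u < √(gh), the root λ₃(β) of p(λ) = -λ((u-λ)² - gh) + ghβ(λ-u) which tends to u + √(gh) as β → 0⁺ satisfies λ₃(β) = u + √(gh) + β√(gh)/(2(1 + F_r)) + O(β²), where F_r = u/√(gh). -/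
open Filter Asymptotics

/-- Key algebraic identity for the expansion. -/
lemma exner_key_identity (c u x β : ℝ) (hc : 0 < c) (hu : 0 < u) (hβ : β ≠ 0) (hx : x ≠ 0)
    (hd : x - u + c ≠ 0)
    (H' : x * (x - (u+c)) * (x-u+c) = c^2*β*(x-u)) :
    (x - (u + c + β * c / (2*(1 + u/c))))/β^2
      = c^4 * (x-u) * (2*u - x) / (2 * x^2 * (x-u+c)^2 * (u+c)) := by
  have hcu : c * (u/c) = u := by field_simp
  have hL : c / (2*(1 + u/c)) = c^2/(2*(u+c)) := by
    rw [div_eq_div_iff (by positivity) (by positivity)]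
    linear_combination (-2*c)*hcu
  rw [mul_div_assoc, hL,
    div_eq_div_iff (by positivity : (β:ℝ)^2 ≠ 0) (by positivity : 2 * x^2 * (x-u+c)^2 * (u+c) ≠ 0)]
  have h3 : β * (c^2/(2*(u+c))) * (2*(u+c)) = β * c^2 := by
    rw [mul_assoc, div_mul_cancel₀ _ (by positivity : 2*(u+c) ≠ 0)]
  linear_combination (2*(u+c)*x*(x-u+c) + β*c^2*(2*u-x)) * H' - x^2*(x-u+c)^2 * h3

/-- The root λ₃(β) of p(λ) = -λ((u-λ)² - gh) + ghβ(λ-u) which tends to u + √(gh) as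
β → 0⁺ satisfies λ₃(β) = u + √(gh) + β√(gh)/(2(1 + F_r)) + O(β²), F_r = u/√(gh). -/
theorem exner_lambda3_expansion
    (g h u : ℝ) (hg : 0 < g) (hh : 0 < h)
    (hu : 0 < u) (hsub : u < Real.sqrt (g * h))
    (l₃ : ℝ → ℝ)
    (hroot : ∀ᶠ β in nhdsWithin (0 : ℝ) (Set.Ioi 0),
      -(l₃ β) * ((u - l₃ β) ^ 2 - g * h) + g * h * β * (l₃ β - u) = 0)
    (hcont : Tendsto l₃ (nhdsWithin (0 : ℝ) (Set.Ioi 0))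
      (nhds (u + Real.sqrt (g * h)))) :
    (fun β => l₃ β -
        (u + Real.sqrt (g * h)
          + β * Real.sqrt (g * h) / (2 * (1 + u / Real.sqrt (g * h)))))
      =O[nhdsWithin (0 : ℝ) (Set.Ioi 0)] (fun β => β ^ 2) := by
  have hgh : 0 < g * h := by positivity
  set c := Real.sqrt (g * h) with hcdef
  have hcpos : 0 < c := Real.sqrt_pos.mpr hgh
  have hc2 : c ^ 2 = g * h := Real.sq_sqrt hgh.le
  -- the limit function
  set G : ℝ → ℝ := fun x => c^4 * (x-u) * (2*u - x) / (2 * x^2 * (x-u+c)^2 * (u+c)) with hGdef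
  have hGcont : ContinuousAt G (u + c) := by
    apply ContinuousAt.div
    · fun_prop
    · fun_prop
    · have : (u+c) - u + c = 2*c := by ring
      rw [this]
      positivity
  -- the quotient function
  set q : ℝ → ℝ := fun β => (l₃ β - (u + c + β * c / (2*(1 + u/c))))/β^2 with hqdef
  have hball : ∀ᶠ β in nhdsWithin (0 : ℝ) (Set.Ioi 0), |l₃ β - (u + c)| < c := by
    have := hcont (Metric.ball_mem_nhds (u + c) hcpos)
    filter_upwards [this] with β hβ
    simpa [Real.dist_eq] using hβ
  have heq : ∀ᶠ β in nhdsWithin (0 : ℝ) (Set.Ioi 0), q β = G (l₃ β) := by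
    filter_upwards [hroot, hball, self_mem_nhdsWithin] with β H hb hβpos
    have hβpos' : (0:ℝ) < β := hβpos
    set x := l₃ β with hxdef
    have hxu : u < x := by
      have := (abs_lt.mp hb).1
      linarith
    have hx0 : x ≠ 0 := by linarith
    have hd : x - u + c ≠ 0 := by nlinarith
    have H2 : -x * ((u - x) ^ 2 - c^2) + c^2 * β * (x - u) = 0 := by
      rw [hc2]; exact H
    have H' : x * (x - (u+c)) * (x-u+c) = c^2*β*(x-u) := by
      linear_combination -H2
    exact exner_key_identity c u x β hcpos hu hβpos'.ne' hx0 hd H'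
  have hq : Tendsto q (nhdsWithin (0 : ℝ) (Set.Ioi 0)) (nhds (G (u+c))) := by
    refine Tendsto.congr' ?_ (hGcont.tendsto.comp hcont)
    filter_upwards [heq] with β hβ
    exact hβ.symm
  set M : ℝ := G (u+c) with hMdef
  rw [isBigO_iff]
  refine ⟨|M| + 1, ?_⟩
  have h1 : ∀ᶠ β in nhdsWithin (0 : ℝ) (Set.Ioi 0), |q β - M| < 1 := by
    have := Metric.tendsto_nhds.mp hq 1 one_pos
    filter_upwards [this] with β hβ
    simpa [Real.dist_eq] using hβ
  filter_upwards [heq, h1, self_mem_nhdsWithin] with β hGβ h1β hβpos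
  have hβpos' : (0:ℝ) < β := hβpos
  have hval : l₃ β - (u + c + β * c / (2*(1 + u/c))) = q β * β^2 := by
    rw [hqdef]
    field_simp
  rw [Real.norm_eq_abs, Real.norm_eq_abs, hval, abs_mul]
  have hqb : |q β| ≤ |M| + 1 := by
    calc |q β| ≤ |q β - M| + |M| := by
          have := abs_sub_abs_le_abs_sub (q β) M
          linarith [abs_sub_comm (q β) M]
        _ ≤ |M| + 1 := by linarith
  exact mul_le_mul_of_nonneg_right hqb (abs_nonneg _)
end

section
/- For subcritical flow 0 < F_r < 1 and small β > 0, the intermediate eigenvalue satisfies λ₂ ≈ βu/(1-F_r²), so that the stiffness ratio λ₃/λ₂ = (u + √(gh))(1-F_r²)/(βu) + O(1) tends to infinity as β → 0⁺; in particular λ₃/λ₂ ≥ (1 - F_r²)(1 + 1/F_r)/β · (1 + o(1)). -/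
open Filter Asymptotics

/-- For subcritical flow 0 < F_r < 1, as β → 0⁺ the intermediate eigenvalue satisfies
λ₂(β) ≈ βu/(1-F_r²), so the stiffness ratio λ₃/λ₂ tends to infinity; in particular
λ₃(β)/λ₂(β) ≥ (1 - F_r²)(1 + 1/F_r)/β · (1 + o(1)). -/
theorem exner_stiffness_ratio
    (g h u : ℝ) (hg : 0 < g) (hh : 0 < h)
    (hu : 0 < u) (hsub : u < Real.sqrt (g * h))
    (Fr : ℝ) (hFr : Fr = u / Real.sqrt (g * h))
    (l₂ l₃ : ℝ → ℝ)
    (hroot₂ : ∀ᶠ β in nhdsWithin (0 : ℝ) (Set.Ioi 0),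
      -(l₂ β) * ((u - l₂ β) ^ 2 - g * h) + g * h * β * (l₂ β - u) = 0)
    (hcont₂ : Tendsto l₂ (nhdsWithin (0 : ℝ) (Set.Ioi 0)) (nhds 0))
    (hroot₃ : ∀ᶠ β in nhdsWithin (0 : ℝ) (Set.Ioi 0),
      -(l₃ β) * ((u - l₃ β) ^ 2 - g * h) + g * h * β * (l₃ β - u) = 0)
    (hcont₃ : Tendsto l₃ (nhdsWithin (0 : ℝ) (Set.Ioi 0))
      (nhds (u + Real.sqrt (g * h)))) :
    Tendsto (fun β => l₂ β / β) (nhdsWithin (0 : ℝ) (Set.Ioi 0))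
      (nhds (u / (1 - Fr ^ 2))) ∧
    Tendsto (fun β => l₃ β / l₂ β) (nhdsWithin (0 : ℝ) (Set.Ioi 0)) atTop ∧
    (∀ ε > (0 : ℝ), ∀ᶠ β in nhdsWithin (0 : ℝ) (Set.Ioi 0),
      (1 - ε) * ((1 - Fr ^ 2) * (1 + 1 / Fr) / β) ≤ l₃ β / l₂ β) := by
  set F := nhdsWithin (0 : ℝ) (Set.Ioi 0) with hF
  set c := Real.sqrt (g * h) with hc
  have hgh : 0 < g * h := mul_pos hg hh
  have hcpos : 0 < c := Real.sqrt_pos.mpr hgh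
  have hc2 : c ^ 2 = g * h := Real.sq_sqrt hgh.le
  have hu2 : u ^ 2 < g * h := by nlinarith [hcpos, hsub, hu]
  have hFrpos : 0 < Fr := by rw [hFr]; positivity
  have hFr2 : Fr ^ 2 = u ^ 2 / (g * h) := by
    rw [hFr, div_pow, hc2]
  have hFrlt : Fr ^ 2 < 1 := by
    rw [hFr2, div_lt_one hgh]; exact hu2
  have hfrne : (1 : ℝ) - Fr ^ 2 ≠ 0 := by linarith
  have hβpos : ∀ᶠ β in F, (0 : ℝ) < β := self_mem_nhdsWithin
  -- eventually denominator nonzero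
  have hDten : Tendsto (fun β => (u - l₂ β) ^ 2 - g * h) F (nhds (u ^ 2 - g * h)) := by
    have : Tendsto (fun β => u - l₂ β) F (nhds u) := by
      simpa using (tendsto_const_nhds.sub hcont₂)
    simpa using ((this.pow 2).sub tendsto_const_nhds)
  have hDneg : ∀ᶠ β in F, (u - l₂ β) ^ 2 - g * h < 0 :=
    hDten.eventually_lt_const (by linarith)
  -- key: l₂ β / β = g*h*(l₂ β - u) / ((u - l₂ β)^2 - g*h)
  have hkey : ∀ᶠ β in F, l₂ β / β = g * h * (l₂ β - u) / ((u - l₂ β) ^ 2 - g * h) := by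
    filter_upwards [hroot₂, hβpos, hDneg] with β heq hβ hD
    rw [div_eq_div_iff (ne_of_gt hβ) (ne_of_lt hD)]
    nlinarith [heq]
  have hL2 : Tendsto (fun β => l₂ β / β) F (nhds (u / (1 - Fr ^ 2))) := by
    have h1 : Tendsto (fun β => g * h * (l₂ β - u) / ((u - l₂ β) ^ 2 - g * h)) F
        (nhds (g * h * (0 - u) / (u ^ 2 - g * h))) := by
      exact (tendsto_const_nhds.mul (hcont₂.sub tendsto_const_nhds)).div hDten
        (by nlinarith)
    have h2 : g * h * (0 - u) / (u ^ 2 - g * h) = u / (1 - Fr ^ 2) := by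
      rw [div_eq_div_iff (by nlinarith) hfrne, hFr2]
      field_simp
      ring
    rw [← h2]
    exact h1.congr' (hkey.mono fun β hβ => hβ.symm)
  have hudiv : 0 < u / (1 - Fr ^ 2) := by
    apply div_pos hu; linarith
  -- eventually l₂ β > 0
  have hl2pos : ∀ᶠ β in F, 0 < l₂ β := by
    filter_upwards [hL2.eventually_const_lt hudiv, hβpos] with β h1 h2
    have := mul_pos h1 h2
    rwa [div_mul_cancel₀ _ (ne_of_gt h2)] at this
  have hl2nhds : Tendsto l₂ F (nhdsWithin 0 (Set.Ioi 0)) :=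
    tendsto_nhdsWithin_iff.mpr ⟨hcont₂, hl2pos⟩
  have huc : 0 < u + c := by positivity
  have hratio : Tendsto (fun β => l₃ β / l₂ β) F atTop := by
    have hinv : Tendsto (fun β => (l₂ β)⁻¹) F atTop :=
      tendsto_inv_nhdsGT_zero.comp hl2nhds
    have := hcont₃.pos_mul_atTop huc hinv
    exact this.congr fun β => (div_eq_mul_inv _ _).symm
  -- the product β * (l₃ β / l₂ β) tends to C
  set C := (1 - Fr ^ 2) * (1 + 1 / Fr) with hCdef
  have hCval : C = (u + c) / (u / (1 - Fr ^ 2)) := by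
    rw [hCdef, hFr]
    have hcne := ne_of_gt hcpos
    have hune := ne_of_gt hu
    field_simp
  have hCpos : 0 < C := by
    rw [hCval]; exact div_pos huc hudiv
  have hprod : Tendsto (fun β => β * (l₃ β / l₂ β)) F (nhds C) := by
    have h1 : Tendsto (fun β => l₃ β / (l₂ β / β)) F (nhds ((u + c) / (u / (1 - Fr ^ 2)))) :=
      hcont₃.div hL2 (ne_of_gt hudiv)
    rw [hCval]
    refine h1.congr' ?_
    filter_upwards [hβpos, hl2pos] with β h2 h3
    field_simp
  refine ⟨hL2, hratio, fun ε hε => ?_⟩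
  have hlt : (1 - ε) * C < C := by nlinarith
  filter_upwards [hprod.eventually_const_lt hlt, hβpos] with β h1 h2
  rw [← mul_div_assoc]
  rw [div_le_iff₀ h2]
  calc (1 - ε) * C ≤ β * (l₃ β / l₂ β) := h1.le
    _ = l₃ β / l₂ β * β := by ring
end
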